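/- arXiv:1707.02963 — 3 statements merged into one kernel-verified Lean document; each statement's English description precedes it below -/
import Mathlib

section
/- Let Q : ℝ^p → ℝ be differentiable, let w* ∈ ℝ^p, and suppose for all u with group support size at most s and all w, Q(w+u) - Q(w) - ⟨∇Q(w), u⟩ ≥ (φ₋/2)‖u‖² with φ₋ > 0. Let w ∈ ℝ^p be such that w − w* is supported on a set of groups S with |S| ≤ s, and suppose max_{g∈G} ‖∇_g Q(w)‖ ≤ ε and Q(w*) ≤ Q(w). Then ‖w − w*‖ ≤ (2ε/φ₋)·√(|S|). -/
/-- Restriction of a vector to the coordinates in `F` (zero outside `F`). -/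
noncomputable def restr {p : ℕ} (F : Finset (Fin p)) (v : EuclideanSpace ℝ (Fin p)) :
    EuclideanSpace ℝ (Fin p) :=
  WithLp.toLp 2 (fun i => if i ∈ F then v i else 0)

/-- Group support size: the number of groups on which `u` is nonzero. -/
noncomputable def gsupp {p m : ℕ} (F : Fin m → Finset (Fin p))
    (u : EuclideanSpace ℝ (Fin p)) : ℕ :=
  {g : Fin m | ∃ i ∈ F g, u i ≠ 0}.ncard

/-- Core estimation-error bound: restricted strong convexity plus an `ℓ_{2,∞}`
gradient bound give `‖w − w*‖ ≤ (2ε/φ₋)·√|S|`. -/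
theorem stmt6 {p m : ℕ} (F : Fin m → Finset (Fin p))
    (hdisj : ∀ g g', g ≠ g' → Disjoint (F g) (F g'))
    (hcover : ∀ i, ∃ g, i ∈ F g)
    (Q : EuclideanSpace ℝ (Fin p) → ℝ)
    (gradQ : EuclideanSpace ℝ (Fin p) → EuclideanSpace ℝ (Fin p))
    (hgrad : ∀ w, HasGradientAt Q (gradQ w) w)
    (s : ℕ) (φm ε : ℝ) (hφ : 0 < φm) (hε : 0 ≤ ε)
    (hsc : ∀ w u : EuclideanSpace ℝ (Fin p), gsupp F u ≤ s →
      Q (w + u) - Q w - (inner ℝ (gradQ w) u : ℝ) ≥ φm / 2 * ‖u‖ ^ 2)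
    (wstar w : EuclideanSpace ℝ (Fin p)) (S : Finset (Fin m))
    (hS : S.card ≤ s)
    (hsupp : ∀ g ∉ S, ∀ i ∈ F g, (w - wstar) i = 0)
    (hgradbd : ∀ g : Fin m, ‖restr (F g) (gradQ w)‖ ≤ ε)
    (hQ : Q wstar ≤ Q w) :
    ‖w - wstar‖ ≤ 2 * ε / φm * Real.sqrt S.card := by
  set v : EuclideanSpace ℝ (Fin p) := w - wstar with hv
  set u : EuclideanSpace ℝ (Fin p) := wstar - w with hu
  have huv : u = -v := by simp [hu, hv, neg_sub]
  -- group support bound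
  have hgs : gsupp F u ≤ s := by
    have hsub : {g : Fin m | ∃ i ∈ F g, u i ≠ 0} ⊆ ↑S := by
      intro g hg
      rcases hg with ⟨i, hi, hne⟩
      by_contra hgS
      apply hne
      have := hsupp g hgS i hi
      simp [huv, this]
    calc gsupp F u ≤ (↑S : Set (Fin m)).ncard :=
          Set.ncard_le_ncard hsub S.finite_toSet
      _ = S.card := Set.ncard_coe_finset S
      _ ≤ s := hS
  -- strong convexity
  have hkey := hsc w u hgs
  have hwu : w + u = wstar := by simp [hu]
  rw [hwu] at hkey
  have hnorm : ‖u‖ = ‖v‖ := by rw [huv, norm_neg]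
  have h1 : φm / 2 * ‖v‖ ^ 2 ≤ (inner ℝ (gradQ w) v : ℝ) := by
    have : (inner ℝ (gradQ w) u : ℝ) = -(inner ℝ (gradQ w) v : ℝ) := by
      rw [huv, inner_neg_right]
    rw [this, hnorm] at hkey
    linarith
  -- partition of univ
  have hU : (Finset.univ : Finset (Fin p)) = Finset.univ.biUnion F := by
    ext i
    simp only [Finset.mem_univ, Finset.mem_biUnion, true_iff]
    obtain ⟨g, hg⟩ := hcover i
    exact ⟨g, trivial, hg⟩
  have hdisj' : ∀ g ∈ (Finset.univ : Finset (Fin m)), ∀ g' ∈ Finset.univ,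
      g ≠ g' → Disjoint (F g) (F g') := fun g _ g' _ h => hdisj g g' h
  -- inner product on restrictions
  have hinner_restr : ∀ (a b : EuclideanSpace ℝ (Fin p)) (g : Fin m),
      (inner ℝ (restr (F g) a) (restr (F g) b) : ℝ) = ∑ i ∈ F g, a i * b i := by
    intro a b g
    rw [PiLp.inner_apply]
    rw [← Finset.sum_subset (Finset.subset_univ (F g))]
    · apply Finset.sum_congr rfl
      intro i hi
      simp [restr, hi, RCLike.inner_apply, mul_comm]
    · intro i _ hi
      simp [restr, hi]
  have hsum_split : ∀ (a b : EuclideanSpace ℝ (Fin p)),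
      (inner ℝ a b : ℝ) = ∑ g : Fin m, ∑ i ∈ F g, a i * b i := by
    intro a b
    rw [PiLp.inner_apply]
    simp only [RCLike.inner_apply, starRingEnd_apply, star_trivial]
    rw [show (Finset.univ : Finset (Fin p)) = Finset.univ.biUnion F from hU,
      Finset.sum_biUnion hdisj']
    exact Finset.sum_congr rfl fun g _ => Finset.sum_congr rfl fun i _ => mul_comm _ _
  -- decompose inner product over groups in S
  have h2 : (inner ℝ (gradQ w) v : ℝ)
      = ∑ g ∈ S, (inner ℝ (restr (F g) (gradQ w)) (restr (F g) v) : ℝ) := by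
    rw [hsum_split]
    rw [← Finset.sum_subset (Finset.subset_univ S)]
    · exact Finset.sum_congr rfl fun g _ => (hinner_restr _ _ g).symm
    · intro g _ hg
      apply Finset.sum_eq_zero
      intro i hi
      have := hsupp g hg i hi
      simp [hv] at this ⊢
      right; exact this
  -- Cauchy-Schwarz per group + gradient bound
  have h3 : (inner ℝ (gradQ w) v : ℝ) ≤ ε * ∑ g ∈ S, ‖restr (F g) v‖ := by
    rw [h2, Finset.mul_sum]
    apply Finset.sum_le_sum
    intro g _
    calc (inner ℝ (restr (F g) (gradQ w)) (restr (F g) v) : ℝ)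
        ≤ ‖restr (F g) (gradQ w)‖ * ‖restr (F g) v‖ := real_inner_le_norm _ _
      _ ≤ ε * ‖restr (F g) v‖ :=
          mul_le_mul_of_nonneg_right (hgradbd g) (norm_nonneg _)
  -- sum of squared restricted norms = ‖v‖²
  have h4 : ∑ g ∈ S, ‖restr (F g) v‖ ^ 2 = ‖v‖ ^ 2 := by
    have hsq : ∀ g, ‖restr (F g) v‖ ^ 2 = ∑ i ∈ F g, v i * v i := by
      intro g
      rw [← real_inner_self_eq_norm_sq, hinner_restr]
    have : ‖v‖ ^ 2 = ∑ g : Fin m, ∑ i ∈ F g, v i * v i := by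
      rw [← real_inner_self_eq_norm_sq, hsum_split]
    rw [this, ← Finset.sum_subset (Finset.subset_univ S)]
    · exact Finset.sum_congr rfl fun g _ => hsq g
    · intro g _ hg
      apply Finset.sum_eq_zero
      intro i hi
      have := hsupp g hg i hi
      simp [hv] at this ⊢
      exact this
  -- Cauchy-Schwarz on the sum
  have h5 : ∑ g ∈ S, ‖restr (F g) v‖ ≤ Real.sqrt S.card * ‖v‖ := by
    have hcs := sq_sum_le_card_mul_sum_sq (s := S) (f := fun g => ‖restr (F g) v‖)
    rw [h4] at hcs
    have hnn : (0:ℝ) ≤ ∑ g ∈ S, ‖restr (F g) v‖ :=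
      Finset.sum_nonneg fun g _ => norm_nonneg _
    have := Real.sqrt_le_sqrt hcs
    rwa [Real.sqrt_sq hnn, Real.sqrt_mul (by positivity), Real.sqrt_sq (norm_nonneg _)] at this
  have hfin : φm / 2 * ‖v‖ ^ 2 ≤ ε * (Real.sqrt S.card * ‖v‖) := by
    calc φm / 2 * ‖v‖ ^ 2 ≤ (inner ℝ (gradQ w) v : ℝ) := h1
      _ ≤ ε * ∑ g ∈ S, ‖restr (F g) v‖ := h3
      _ ≤ ε * (Real.sqrt S.card * ‖v‖) := mul_le_mul_of_nonneg_left h5 hε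
  rcases eq_or_lt_of_le (norm_nonneg v) with h0 | h0
  · rw [← h0]
    positivity
  · rw [div_mul_eq_mul_div, le_div_iff₀ hφ]
    nlinarith [hfin, h0, Real.sqrt_nonneg (S.card : ℝ)]
end

section
/- Let Q : ℝ^p → ℝ be differentiable, satisfying restricted strong convexity with parameter φ₋ at scale s and restricted smoothness with parameter φ₊ at single-group scale. Let ŵ minimize Q over vectors supported on group set Ĝ, and let w' be any vector supported on group set G' with |G' ∪ Ĝ| ≤ s. If g* ∈ G' \ Ĝ attains (up to factor λ ∈ (0,1]) the maximal one-group decrease, i.e., Q(ŵ) − min_{α supported on g*} Q(ŵ + α) ≥ λ·max_{g ∈ G'\Ĝ} [Q(ŵ) − min_{α supported on g} Q(ŵ+α)], then Q(ŵ) − Q(w') ≤ (φ₊ · |G' \ Ĝ| / (λ·φ₋)) · (Q(ŵ) − min_{α supported on g*} Q(ŵ + α)). -/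
/-- The best one-group decrease of `Q` from `w` along directions supported on `Fg`:
`Q(w) − min_{supp(α) ⊆ Fg} Q(w + α)`. -/
noncomputable def oneStepGain {p : ℕ} (Q : EuclideanSpace ℝ (Fin p) → ℝ)
    (Fg : Finset (Fin p)) (w : EuclideanSpace ℝ (Fin p)) : ℝ :=
  Q w - sInf ((fun α => Q (w + α)) '' {α | ∀ i ∉ Fg, α i = 0})

set_option maxHeartbeats 1600000 in
/-- Lemma `forward_process_obj`: a `λ`-approximate greedy forward step makes
progress `Q(ŵ) − Q(w') ≤ (φ₊·|G'\Ĝ| / (λ·φ₋)) · gain(g*)` relative to any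
competitor `w'` supported on `G'`. -/
theorem stmt9 {p m : ℕ} (F : Fin m → Finset (Fin p))
    (hdisj : ∀ g g', g ≠ g' → Disjoint (F g) (F g'))
    (hcover : ∀ i, ∃ g, i ∈ F g)
    (Q : EuclideanSpace ℝ (Fin p) → ℝ)
    (gradQ : EuclideanSpace ℝ (Fin p) → EuclideanSpace ℝ (Fin p))
    (hgrad : ∀ w, HasGradientAt Q (gradQ w) w)
    (s : ℕ) (φm φp lam : ℝ) (hφm : 0 < φm) (hφp : 0 < φp)
    (hlam0 : 0 < lam) (hlam1 : lam ≤ 1)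
    (hsc : ∀ w u : EuclideanSpace ℝ (Fin p), gsupp F u ≤ s →
      Q (w + u) - Q w - (inner ℝ (gradQ w) u : ℝ) ≥ φm / 2 * ‖u‖ ^ 2)
    (hsm : ∀ (g : Fin m) (w u : EuclideanSpace ℝ (Fin p)), (∀ i ∉ F g, u i = 0) →
      Q (w + u) - Q w - (inner ℝ (gradQ w) u : ℝ) ≤ φp / 2 * ‖u‖ ^ 2)
    (Ghat G' : Finset (Fin m))
    (what : EuclideanSpace ℝ (Fin p))
    (hsupp : ∀ i : Fin p, (∀ g ∈ Ghat, i ∉ F g) → what i = 0)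
    (hmin : ∀ u : EuclideanSpace ℝ (Fin p),
      (∀ i : Fin p, (∀ g ∈ Ghat, i ∉ F g) → u i = 0) → Q what ≤ Q u)
    (w' : EuclideanSpace ℝ (Fin p))
    (hsupp' : ∀ i : Fin p, (∀ g ∈ G', i ∉ F g) → w' i = 0)
    (hcard : (G' ∪ Ghat).card ≤ s)
    (gstar : Fin m) (hgstar : gstar ∈ G' \ Ghat)
    (hsel : ∀ g ∈ G' \ Ghat,
      oneStepGain Q (F gstar) what ≥ lam * oneStepGain Q (F g) what) :
    Q what - Q w' ≤
      φp * (G' \ Ghat).card / (lam * φm) * oneStepGain Q (F gstar) what := by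
  classical
  set S : Finset (Fin m) := G' \ Ghat with hSdef
  set gr : EuclideanSpace ℝ (Fin p) := gradQ what with hgrdef
  set Δ : EuclideanSpace ℝ (Fin p) := w' - what with hΔdef
  have hΔ : what + Δ = w' := by rw [hΔdef]; abel
  have hΔap : ∀ i, Δ i = w' i - what i := fun i => rfl
  have huniq : ∀ (i : Fin p) (g g' : Fin m), i ∈ F g → i ∈ F g' → g = g' := by
    intro i g g' h h'
    by_contra hne
    exact (Finset.disjoint_left.mp (hdisj g g' hne) h) h'
  have hnormsq : ∀ x : EuclideanSpace ℝ (Fin p), ‖x‖ ^ 2 = ∑ i, x i ^ 2 := by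
    intro x; rw [EuclideanSpace.norm_eq, Real.sq_sqrt (Finset.sum_nonneg (fun i _ => sq_nonneg _))]; simp [Real.norm_eq_abs, sq_abs]
  have hs1 : 1 ≤ s := by
    have h1 : gstar ∈ G' ∪ Ghat := Finset.mem_union_left _ (Finset.mem_sdiff.mp hgstar).1
    have h2 := Finset.card_pos.mpr ⟨gstar, h1⟩
    omega
  -- directional derivative is zero for Ghat-supported directions
  have hdir : ∀ v : EuclideanSpace ℝ (Fin p),
      HasDerivAt (fun t : ℝ => Q (what + t • v)) (inner ℝ gr v : ℝ) 0 := by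
    intro v
    have h1' : HasFDerivAt Q ((InnerProductSpace.toDual ℝ (EuclideanSpace ℝ (Fin p))) gr)
        ((0:ℝ) • v + what) := by simpa using (hgrad what).hasFDerivAt
    have hc' : HasDerivAt (fun t : ℝ => t • v + what) v 0 := by
      simpa using ((hasDerivAt_id (0:ℝ)).smul_const v).add_const what
    have h2 := h1'.comp_hasDerivAt 0 hc'
    have e : (fun t : ℝ => Q (what + t • v)) = (fun t : ℝ => Q (t • v + what)) := by
      ext t; rw [add_comm]
    rw [e]; exact h2
  have hgrad0 : ∀ v : EuclideanSpace ℝ (Fin p),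
      (∀ i, (∀ g ∈ Ghat, i ∉ F g) → v i = 0) → (inner ℝ gr v : ℝ) = 0 := by
    intro v hv
    refine IsLocalMin.hasDerivAt_eq_zero (Filter.Eventually.of_forall ?_) (hdir v)
    intro t
    have h0 : Q what ≤ Q (what + t • v) := by
      apply hmin
      intro i hi
      have : (what + t • v) i = what i + t * v i := rfl
      rw [this, hsupp i hi, hv i hi]; ring
    simpa using h0
  -- support of one group implies gsupp ≤ s
  have hsupp1 : ∀ (g : Fin m) (α : EuclideanSpace ℝ (Fin p)), (∀ i ∉ F g, α i = 0) →
      gsupp F α ≤ s := by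
    intro g α hα
    have hsub : {g' : Fin m | ∃ i ∈ F g', α i ≠ 0} ⊆ {g} := by
      rintro g' ⟨i, hi, hne⟩
      have hig : i ∈ F g := by by_contra h; exact hne (hα i h)
      simp [huniq i g' g hi hig]
    calc gsupp F α ≤ ({g} : Set (Fin m)).ncard :=
          Set.ncard_le_ncard hsub (Set.finite_singleton g)
      _ = 1 := Set.ncard_singleton g
      _ ≤ s := hs1
  have hlb : ∀ (g : Fin m) (α : EuclideanSpace ℝ (Fin p)), (∀ i ∉ F g, α i = 0) →
      Q what - ‖gr‖^2/(2*φm) ≤ Q (what + α) := by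
    intro g α hα
    have h1 := hsc what α (hsupp1 g α hα)
    rw [← hgrdef] at h1
    have h2 : -(‖gr‖ * ‖α‖) ≤ (inner ℝ gr α : ℝ) :=
      neg_le_of_abs_le (abs_real_inner_le_norm gr α)
    have hd : ‖gr‖^2 = 2*φm*(‖gr‖^2/(2*φm)) := by field_simp
    nlinarith [sq_nonneg (φm * ‖α‖ - ‖gr‖), hφm, h1, h2, hd]
  have hBdd : ∀ g : Fin m,
      BddBelow ((fun α => Q (what + α)) '' {α : EuclideanSpace ℝ (Fin p) | ∀ i ∉ F g, α i = 0}) := by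
    intro g
    exact ⟨Q what - ‖gr‖^2/(2*φm), by rintro y ⟨α, hα, rfl⟩; exact hlb g α hα⟩
  have hgain_ge : ∀ (g : Fin m) (α : EuclideanSpace ℝ (Fin p)), (∀ i ∉ F g, α i = 0) →
      Q what - Q (what + α) ≤ oneStepGain Q (F g) what := by
    intro g α hα
    have h1 : sInf ((fun α => Q (what + α)) '' {α : EuclideanSpace ℝ (Fin p) | ∀ i ∉ F g, α i = 0})
        ≤ Q (what + α) := csInf_le (hBdd g) ⟨α, hα, rfl⟩
    unfold oneStepGain; linarith
  have hgain0 : ∀ g : Fin m, 0 ≤ oneStepGain Q (F g) what := by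
    intro g
    have := hgain_ge g 0 (by intro i _; rfl)
    simpa using this
  -- group restrictions of Δ
  set Δg : Fin m → EuclideanSpace ℝ (Fin p) :=
    fun g => WithLp.toLp 2 (fun i => if i ∈ F g then Δ i else 0) with hΔgdef
  have hΔg_apply : ∀ g i, Δg g i = if i ∈ F g then Δ i else 0 := fun g i => rfl
  have hΔg_supp : ∀ g, ∀ i ∉ F g, Δg g i = 0 := by
    intro g i hi; rw [hΔg_apply, if_neg hi]
  set G0 : ℝ := oneStepGain Q (F gstar) what with hG0def
  have hG0 : 0 ≤ G0 := hgain0 gstar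
  -- key per-group inequality
  have hkey : ∀ g ∈ S, (inner ℝ gr (Δg g) : ℝ)^2 ≤ (2*φp*(G0/lam)) * ‖Δg g‖^2 := by
    intro g hg
    have hgainle : oneStepGain Q (F g) what ≤ G0 / lam := by
      rw [le_div_iff₀ hlam0]
      have := hsel g hg
      linarith
    by_cases hz : Δg g = 0
    · simp [hz]
    · have hn : 0 < ‖Δg g‖^2 := pow_pos (norm_pos_iff.mpr hz) 2
      set x : ℝ := (inner ℝ gr (Δg g) : ℝ) with hxdef
      set n : ℝ := ‖Δg g‖^2 with hndef
      set t : ℝ := -x / (φp * n) with htdef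
      have hα : ∀ i ∉ F g, (t • Δg g) i = 0 := by
        intro i hi
        have : (t • Δg g) i = t * (Δg g i) := rfl
        rw [this, hΔg_supp g i hi]; ring
      have h1 := hsm g what (t • Δg g) hα
      rw [← hgrdef] at h1
      have h2 : (inner ℝ gr (t • Δg g) : ℝ) = t * x := real_inner_smul_right gr _ t
      have h3 : ‖t • Δg g‖^2 = t^2 * n := by
        rw [hndef, norm_smul]; simp [mul_pow, sq_abs]
      have h4 := hgain_ge g (t • Δg g) hα
      rw [h2] at h1; rw [h3] at h1
      have hφpn : (0:ℝ) < φp * n := mul_pos hφp hn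
      have key : x^2 / (2*φp*n) ≤ oneStepGain Q (F g) what := by
        have e : -(t*x) - φp/2*(t^2*n) = x^2/(2*φp*n) := by
          rw [htdef]; field_simp; ring
        nlinarith [h1, h4]
      have h5 : x^2 / (2*φp*n) ≤ G0/lam := le_trans key hgainle
      calc x^2 = (2*φp*n) * (x^2/(2*φp*n)) := by field_simp
        _ ≤ (2*φp*n) * (G0/lam) := by
            apply mul_le_mul_of_nonneg_left h5 (by positivity)
        _ = 2*φp*(G0/lam) * n := by ring
  -- decomposition of Δ
  set Δin : EuclideanSpace ℝ (Fin p) :=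
    WithLp.toLp 2 (fun i => if ∃ g ∈ Ghat, i ∈ F g then Δ i else 0) with hΔindef
  have hΔin_apply : ∀ i, Δin i = if ∃ g ∈ Ghat, i ∈ F g then Δ i else 0 := fun i => rfl
  have hsumap : ∀ i, (∑ g ∈ S, Δg g) i = ∑ g ∈ S, Δg g i := fun i => by rw [WithLp.ofLp_sum, Finset.sum_apply]
  have hsum2 : ∀ (i : Fin p) (g0 : Fin m), i ∈ F g0 →
      ∑ g ∈ S, Δg g i = if g0 ∈ S then Δ i else 0 := by
    intro i g0 hg0
    rw [Finset.sum_congr rfl (fun g _ => ?_), Finset.sum_ite_eq' S g0 (fun _ => Δ i)]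
    rw [hΔg_apply]
    by_cases h : g = g0
    · subst h; simp [hg0]
    · have hni : i ∉ F g := fun hi => h (huniq i g g0 hi hg0)
      simp [hni, h]
  have hdecomp : Δ = Δin + ∑ g ∈ S, Δg g := by
    ext i
    obtain ⟨g0, hg0⟩ := hcover i
    have hrhs : (Δin + ∑ g ∈ S, Δg g) i = Δin i + (∑ g ∈ S, Δg g) i := rfl
    rw [hrhs, hsumap, hsum2 i g0 hg0, hΔin_apply]
    by_cases hG : g0 ∈ Ghat
    · have h1 : (∃ g ∈ Ghat, i ∈ F g) := ⟨g0, hG, hg0⟩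
      have h2 : g0 ∉ S := by simp [hSdef, hG]
      simp [h1, h2]
    · have h1 : ¬(∃ g ∈ Ghat, i ∈ F g) := by
        rintro ⟨g, hgG, hi⟩
        exact hG ((huniq i g0 g hg0 hi) ▸ hgG)
      by_cases hG' : g0 ∈ G'
      · have h2 : g0 ∈ S := Finset.mem_sdiff.mpr ⟨hG', hG⟩
        simp [h1, h2]
      · have h2 : g0 ∉ S := fun h => hG' (Finset.mem_sdiff.mp h).1
        have h3 : w' i = 0 := hsupp' i (fun g hgG hi => hG' ((huniq i g g0 hi hg0) ▸ hgG))
        have h4 : what i = 0 := hsupp i (fun g hgG hi => hG ((huniq i g g0 hi hg0) ▸ hgG))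
        rw [hΔap] at *
        simp [h1, h2, h3, h4]
  have hΔin0 : (inner ℝ gr Δin : ℝ) = 0 := by
    apply hgrad0
    intro i hi
    rw [hΔin_apply]
    apply if_neg
    rintro ⟨g, hgG, hig⟩
    exact hi g hgG hig
  have hsplit : (inner ℝ gr Δ : ℝ) = ∑ g ∈ S, (inner ℝ gr (Δg g) : ℝ) := by
    rw [hdecomp, inner_add_right, inner_sum, hΔin0, zero_add]
  -- sum of squared norms bound
  have hnormle : ∑ g ∈ S, ‖Δg g‖^2 ≤ ‖Δ‖^2 := by
    rw [hnormsq Δ]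
    have e1 : ∑ g ∈ S, ‖Δg g‖^2 = ∑ g ∈ S, ∑ i, Δg g i ^ 2 :=
      Finset.sum_congr rfl (fun g _ => hnormsq (Δg g))
    rw [e1, Finset.sum_comm]
    apply Finset.sum_le_sum
    intro i _
    obtain ⟨g0, hg0⟩ := hcover i
    have e2 : ∑ g ∈ S, Δg g i ^ 2 = if g0 ∈ S then Δ i ^ 2 else 0 := by
      rw [Finset.sum_congr rfl (fun g _ => ?_), Finset.sum_ite_eq' S g0 (fun _ => Δ i ^ 2)]
      rw [hΔg_apply]
      by_cases h : g = g0
      · subst h; simp [hg0]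
      · have hni : i ∉ F g := fun hi => h (huniq i g g0 hi hg0)
        simp [hni, h]
    rw [e2]
    split_ifs
    · exact le_refl _
    · exact sq_nonneg _
  -- gsupp of Δ
  have hgsuppΔ : gsupp F Δ ≤ s := by
    have hsub : {g : Fin m | ∃ i ∈ F g, Δ i ≠ 0} ⊆ ↑(G' ∪ Ghat) := by
      rintro g ⟨i, hi, hne⟩
      have hex : ∃ g' ∈ G' ∪ Ghat, i ∈ F g' := by
        by_contra h
        push_neg at h
        have h1 : w' i = 0 := hsupp' i (fun g' hg' => h g' (Finset.mem_union_left _ hg'))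
        have h2 : what i = 0 := hsupp i (fun g' hg' => h g' (Finset.mem_union_right _ hg'))
        apply hne
        rw [hΔap, h1, h2]; ring
      obtain ⟨g', hg', hig'⟩ := hex
      rw [huniq i g g' hi hig']
      exact hg'
    calc gsupp F Δ ≤ (↑(G' ∪ Ghat) : Set (Fin m)).ncard :=
          Set.ncard_le_ncard hsub (Finset.finite_toSet _)
      _ = (G' ∪ Ghat).card := Set.ncard_coe_finset _
      _ ≤ s := hcard
  have hmain := hsc what Δ hgsuppΔ
  rw [hΔ, ← hgrdef] at hmain
  -- finish
  clear_value S gr Δ Δg Δin G0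
  rcases eq_or_lt_of_le hG0 with hGz | hGpos
  · -- G0 = 0
    have hx0 : ∀ g ∈ S, (inner ℝ gr (Δg g) : ℝ) = 0 := by
      intro g hg
      have h1 := hkey g hg
      rw [← hGz] at h1
      simp only [zero_div, mul_zero, zero_mul] at h1
      have := sq_nonneg (inner ℝ gr (Δg g) : ℝ)
      have h2 : (inner ℝ gr (Δg g) : ℝ)^2 = 0 := le_antisymm h1 this
      exact pow_eq_zero_iff (by norm_num) |>.mp h2
    have hiz : (inner ℝ gr Δ : ℝ) = 0 := by
      rw [hsplit, Finset.sum_congr rfl hx0, Finset.sum_const, smul_zero]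
    rw [hiz] at hmain
    have hnn : (0:ℝ) ≤ φm / 2 * ‖Δ‖ ^ 2 := by positivity
    rw [← hGz]
    simp only [mul_zero]
    linarith [hmain, hnn]
  · obtain ⟨c, hcdef⟩ : ∃ c : ℝ, c = 2*φp*G0/(lam*φm) := ⟨_, rfl⟩
    have hc : 0 < c := by rw [hcdef]; positivity
    have hφmc : φm * c = 2*φp*(G0/lam) := by rw [hcdef]; field_simp
    have hper : ∀ g ∈ S, -(inner ℝ gr (Δg g) : ℝ) ≤ φm/2 * ‖Δg g‖^2 + c/2 := by
      intro g hg
      have h1 := hkey g hg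
      have h2 : (inner ℝ gr (Δg g) : ℝ)^2 ≤ φm * c * ‖Δg g‖^2 := by rw [hφmc]; exact h1
      nlinarith [sq_nonneg ((inner ℝ gr (Δg g) : ℝ) + c), hc, sq_nonneg ‖Δg g‖]
    have hsumper : -(inner ℝ gr Δ : ℝ) ≤ φm/2 * (∑ g ∈ S, ‖Δg g‖^2) + S.card * (c/2) := by
      rw [hsplit, ← Finset.sum_neg_distrib]
      calc ∑ g ∈ S, -(inner ℝ gr (Δg g) : ℝ) ≤ ∑ g ∈ S, (φm/2 * ‖Δg g‖^2 + c/2) :=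
            Finset.sum_le_sum hper
        _ = φm/2 * (∑ g ∈ S, ‖Δg g‖^2) + S.card * (c/2) := by
            rw [Finset.sum_add_distrib, Finset.mul_sum, Finset.sum_const]
            simp [nsmul_eq_mul]
    have hfin : Q what - Q w' ≤ S.card * (c/2) := by
      have h1 : φm/2 * (∑ g ∈ S, ‖Δg g‖^2) ≤ φm/2 * ‖Δ‖^2 := by
        apply mul_le_mul_of_nonneg_left hnormle (by positivity)
      nlinarith [hmain, hsumper]
    calc Q what - Q w' ≤ S.card * (c/2) := hfin
      _ = φp * S.card / (lam * φm) * G0 := by rw [hcdef]; ring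
end

section
/- Let Q be twice differentiable with Q(w) = (1/n)Σ_{i=1}^n f_i(xᵢᵀw), where each f_i : ℝ → ℝ is twice differentiable with l ≤ f_i''(z) ≤ L for all z in the relevant domain (0 < l ≤ L). Then for any index set F ⊆ {1,…,p}, the restricted curvature constants satisfy l·λ_min((1/n)Σ xᵢ_F xᵢ_Fᵀ) ≤ ρ₋(F) and ρ₊(F) ≤ L·λ_max((1/n)Σ xᵢ_F xᵢ_Fᵀ), where ρ₋(F) (resp. ρ₊(F)) is the infimum (resp. supremum) over u supported on F and w of [Q(w+u) − Q(w) − ⟨∇Q(w), u⟩] / ((1/2)‖u‖²), and xᵢ_F denotes the subvector of xᵢ on F. -/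
open Finset

/-- Taylor-type bound: if `g'' ≥ c` everywhere then `g 1 ≥ g 0 + g' 0 + c/2`. -/
lemma aux_taylor14 (g g1 g2 : ℝ → ℝ) (hg : ∀ t, HasDerivAt g (g1 t) t)
    (hg1 : ∀ t, HasDerivAt g1 (g2 t) t) (c : ℝ) (hc : ∀ t, c ≤ g2 t) :
    g 0 + g1 0 + c / 2 ≤ g 1 := by
  set ψ : ℝ → ℝ := fun t => g1 t - g1 0 - c * t with hψdef
  have hψ : ∀ t, HasDerivAt ψ (g2 t - c) t := by
    intro t
    have h := ((hg1 t).sub_const (g1 0)).sub ((hasDerivAt_id t).const_mul c)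
    exact h.congr_deriv (by ring)
  have hψmono : Monotone ψ :=
    monotone_of_deriv_nonneg (fun t => (hψ t).differentiableAt)
      (fun t => by rw [(hψ t).deriv]; linarith [hc t])
  have hψ0 : ψ 0 = 0 := by simp [hψdef]
  set φ : ℝ → ℝ := fun t => g t - g 0 - t * g1 0 - c / 2 * t ^ 2 with hφdef
  have hφ : ∀ t, HasDerivAt φ (ψ t) t := by
    intro t
    have h := (((hg t).sub_const (g 0)).sub ((hasDerivAt_id t).mul_const (g1 0))).sub
      ((hasDerivAt_pow 2 t).const_mul (c / 2))
    refine h.congr_deriv ?_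
    show _ = g1 t - g1 0 - c * t
    have e : (2:ℕ) - 1 = 1 := rfl
    rw [e, pow_one]; push_cast; ring
  have hmono : MonotoneOn φ (Set.Icc (0 : ℝ) 1) := by
    apply monotoneOn_of_deriv_nonneg (convex_Icc 0 1)
      (fun t _ => (hφ t).differentiableAt.continuousAt.continuousWithinAt)
      (fun t _ => (hφ t).differentiableAt.differentiableWithinAt)
    intro t ht
    rw [(hφ t).deriv, interior_Icc] at *
    rw [← hψ0]
    exact hψmono ht.1.le
  have := hmono (Set.mem_Icc.2 ⟨le_refl 0, zero_le_one⟩)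
    (Set.mem_Icc.2 ⟨zero_le_one, le_refl 1⟩) zero_le_one
  simp only [hφdef] at this
  nlinarith [this]

/-- Rayleigh quotient bounds for a real Hermitian matrix. -/
lemma aux_rayleigh14 {m : Type*} [Fintype m] [DecidableEq m] (A : Matrix m m ℝ)
    (hA : A.IsHermitian) (v : EuclideanSpace ℝ m) (lo hi : ℝ)
    (hlo : ∀ j, lo ≤ hA.eigenvalues j) (hhi : ∀ j, hA.eigenvalues j ≤ hi) :
    lo * ‖v‖ ^ 2 ≤ ∑ a, ∑ b, A a b * v a * v b ∧
      ∑ a, ∑ b, A a b * v a * v b ≤ hi * ‖v‖ ^ 2 := by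
  classical
  set b : OrthonormalBasis m ℝ (EuclideanSpace ℝ m) := hA.eigenvectorBasis with hb
  set lam : m → ℝ := hA.eigenvalues with hlam
  set c : m → ℝ := fun j => (inner ℝ (b j) v : ℝ) with hc
  have hvb : ∀ j, (inner ℝ v (b j) : ℝ) = c j := fun j => (real_inner_comm v (b j)).symm
  have hAb : ∀ j, Matrix.toEuclideanLin A (b j) = lam j • b j := by
    intro j
    apply (WithLp.equiv 2 (m → ℝ)).injective
    ext a
    have := congrFun (hA.mulVec_eigenvectorBasis j) a
    simpa [Matrix.toEuclideanLin_apply] using this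
  have hsum : ∑ j, c j • b j = v := b.sum_repr' v
  have hAv : Matrix.toEuclideanLin A v = ∑ j, (lam j * c j) • b j := by
    conv_lhs => rw [← hsum]
    rw [map_sum]
    refine Finset.sum_congr rfl fun j _ => ?_
    rw [map_smul, hAb j, smul_smul, mul_comm]
  have hquad : (inner ℝ v (Matrix.toEuclideanLin A v) : ℝ) = ∑ j, lam j * c j ^ 2 := by
    rw [hAv, inner_sum]
    refine Finset.sum_congr rfl fun j _ => ?_
    rw [real_inner_smul_right, hvb]; ring
  have hnorm : ‖v‖ ^ 2 = ∑ j, c j ^ 2 := by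
    have h1 : (inner ℝ v v : ℝ) = inner ℝ v (∑ j, c j • b j) := by rw [hsum]
    rw [← real_inner_self_eq_norm_sq, h1, inner_sum]
    refine Finset.sum_congr rfl fun j _ => ?_
    rw [real_inner_smul_right, hvb]; ring
  have hform : (inner ℝ v (Matrix.toEuclideanLin A v) : ℝ) = ∑ a, ∑ b, A a b * v a * v b := by
    simp only [Matrix.toEuclideanLin_apply, PiLp.inner_apply, RCLike.inner_apply, conj_trivial,
      Matrix.mulVec, dotProduct,
      Finset.mul_sum, Finset.sum_mul]
    exact Finset.sum_congr rfl fun a _ => Finset.sum_congr rfl fun j _ => by ring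
  constructor
  · rw [← hform, hquad, hnorm, Finset.mul_sum]
    exact Finset.sum_le_sum fun j _ => mul_le_mul_of_nonneg_right (hlo j) (sq_nonneg _)
  · rw [← hform, hquad, hnorm, Finset.mul_sum]
    exact Finset.sum_le_sum fun j _ => mul_le_mul_of_nonneg_right (hhi j) (sq_nonneg _)

/-- Restricted curvature of a separable M-estimation criterion
`Q(w) = (1/n) Σ f_i(xᵢᵀw)` is controlled by the restricted eigenvalues of the
empirical Gram matrix, up to the curvature bounds `l ≤ f_i'' ≤ L`:
`l·λ_min(M) ≤ ρ₋(F)` and `ρ₊(F) ≤ L·λ_max(M)`. -/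
theorem stmt14 {p n : ℕ} (hn : 0 < n)
    (x : Fin n → EuclideanSpace ℝ (Fin p)) (f : Fin n → ℝ → ℝ)
    (hf : ∀ i, ContDiff ℝ 2 (f i)) (l L : ℝ) (hl : 0 < l) (hlL : l ≤ L)
    (hcurv : ∀ i z, l ≤ deriv (deriv (f i)) z ∧ deriv (deriv (f i)) z ≤ L)
    (Q : EuclideanSpace ℝ (Fin p) → ℝ)
    (hQ : ∀ w, Q w = (1 / n : ℝ) * ∑ i, f i (inner ℝ (x i) w : ℝ))
    (gradQ : EuclideanSpace ℝ (Fin p) → EuclideanSpace ℝ (Fin p))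
    (hgrad : ∀ w, HasGradientAt Q (gradQ w) w)
    (F : Finset (Fin p)) (hF : (Finset.univ : Finset F).Nonempty)
    (M : Matrix F F ℝ)
    (hM : ∀ a b : F, M a b = (1 / n : ℝ) * ∑ i, x i a * x i b)
    (hHerm : M.IsHermitian)
    (ρminus ρplus : ℝ)
    (hρm : ρminus = sInf {r | ∃ w u : EuclideanSpace ℝ (Fin p),
      (∀ i ∉ F, u i = 0) ∧ u ≠ 0 ∧
      r = (Q (w + u) - Q w - (inner ℝ (gradQ w) u : ℝ)) / (1 / 2 * ‖u‖ ^ 2)})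
    (hρp : ρplus = sSup {r | ∃ w u : EuclideanSpace ℝ (Fin p),
      (∀ i ∉ F, u i = 0) ∧ u ≠ 0 ∧
      r = (Q (w + u) - Q w - (inner ℝ (gradQ w) u : ℝ)) / (1 / 2 * ‖u‖ ^ 2)}) :
    l * Finset.univ.inf' hF hHerm.eigenvalues ≤ ρminus ∧
      ρplus ≤ L * Finset.univ.sup' hF hHerm.eigenvalues := by
  classical
  obtain ⟨a0, -⟩ := id hF
  set lmin := Finset.univ.inf' hF hHerm.eigenvalues with hlmind
  set lmax := Finset.univ.sup' hF hHerm.eigenvalues with hlmaxd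
  have hL : 0 < L := lt_of_lt_of_le hl hlL
  have hnR : (0 : ℝ) < (n : ℝ) := by exact_mod_cast hn
  have hfd : ∀ i, Differentiable ℝ (f i) := fun i => (hf i).differentiable (by norm_num)
  have hfd1 : ∀ i, Differentiable ℝ (deriv (f i)) := by
    intro i
    have h2 := hf i
    rw [show (2 : WithTop ℕ∞) = 1 + 1 from by norm_num] at h2
    exact ((contDiff_succ_iff_deriv.mp h2).2.2).differentiable (by norm_num)
  -- key bound for every element of the quotient set
  have key : ∀ r ∈ {r | ∃ w u : EuclideanSpace ℝ (Fin p),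
      (∀ i ∉ F, u i = 0) ∧ u ≠ 0 ∧
      r = (Q (w + u) - Q w - (inner ℝ (gradQ w) u : ℝ)) / (1 / 2 * ‖u‖ ^ 2)},
      l * lmin ≤ r ∧ r ≤ L * lmax := by
    rintro r ⟨w, u, hu, hune, rfl⟩
    set a_ : Fin n → ℝ := fun i => (inner ℝ (x i) w : ℝ) with ha_
    set b_ : Fin n → ℝ := fun i => (inner ℝ (x i) u : ℝ) with hb_
    set g : ℝ → ℝ := fun t => (1 / n : ℝ) * ∑ i, f i (a_ i + t * b_ i) with hgdef
    set g1 : ℝ → ℝ := fun t => (1 / n : ℝ) * ∑ i, deriv (f i) (a_ i + t * b_ i) * b_ i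
      with hg1def
    set g2 : ℝ → ℝ :=
      fun t => (1 / n : ℝ) * ∑ i, deriv (deriv (f i)) (a_ i + t * b_ i) * b_ i ^ 2 with hg2def
    set S : ℝ := (1 / n : ℝ) * ∑ i, b_ i ^ 2 with hSdef
    have hlin : ∀ (i : Fin n) (t : ℝ), HasDerivAt (fun t : ℝ => a_ i + t * b_ i) (b_ i) t := by
      intro i t
      simpa using (hasDerivAt_id t).mul_const (b_ i)
    have hgd : ∀ t, HasDerivAt g (g1 t) t := by
      intro t
      refine HasDerivAt.const_mul _ (HasDerivAt.fun_sum fun i _ => ?_)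
      exact ((hfd i _).hasDerivAt).comp t (hlin i t)
    have hg1d : ∀ t, HasDerivAt g1 (g2 t) t := by
      intro t
      refine HasDerivAt.const_mul _ (HasDerivAt.fun_sum fun i _ => ?_)
      have h := (((hfd1 i _).hasDerivAt).comp t (hlin i t)).mul_const (b_ i)
      exact h.congr_deriv (by ring)
    have hinner : ∀ (i : Fin n) (t : ℝ), (inner ℝ (x i) (w + t • u) : ℝ) = a_ i + t * b_ i := by
      intro i t
      rw [inner_add_right, real_inner_smul_right]
    have hgt : ∀ t, Q (w + t • u) = g t := by
      intro t
      rw [hQ]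
      simp only [hinner, hgdef]
    have hcurve : HasDerivAt (fun t : ℝ => w + t • u) u (0 : ℝ) := by
      simpa using (hasDerivAt_id (0 : ℝ)).smul_const u
    have hQf : HasFDerivAt Q (InnerProductSpace.toDual ℝ _ (gradQ w)) w := (hgrad w).hasFDerivAt
    have hw0 : w + (0 : ℝ) • u = w := by simp
    have hcomp : HasDerivAt (fun t : ℝ => Q (w + t • u)) (inner ℝ (gradQ w) u : ℝ) 0 := by
      have h := HasFDerivAt.comp_hasDerivAt 0 (hw0 ▸ hQf) hcurve
      exact h.congr_deriv (by simp)
    have hgradeq : (inner ℝ (gradQ w) u : ℝ) = g1 0 := by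
      have h2 : HasDerivAt g (inner ℝ (gradQ w) u : ℝ) 0 := (funext hgt) ▸ hcomp
      exact h2.unique (hgd 0)
    -- curvature bounds on g2
    have hg2lo : ∀ t, l * S ≤ g2 t := by
      intro t
      have h1 : ∑ i, l * b_ i ^ 2 ≤ ∑ i, deriv (deriv (f i)) (a_ i + t * b_ i) * b_ i ^ 2 :=
        Finset.sum_le_sum fun i _ =>
          mul_le_mul_of_nonneg_right (hcurv i _).1 (sq_nonneg _)
      have h2 := mul_le_mul_of_nonneg_left h1 (by positivity : (0 : ℝ) ≤ 1 / n)
      calc l * S = (1 / n : ℝ) * ∑ i, l * b_ i ^ 2 := by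
            rw [hSdef, ← Finset.mul_sum]; ring
        _ ≤ g2 t := h2
    have hg2hi : ∀ t, g2 t ≤ L * S := by
      intro t
      have h1 : ∑ i, deriv (deriv (f i)) (a_ i + t * b_ i) * b_ i ^ 2 ≤ ∑ i, L * b_ i ^ 2 :=
        Finset.sum_le_sum fun i _ =>
          mul_le_mul_of_nonneg_right (hcurv i _).2 (sq_nonneg _)
      have h2 := mul_le_mul_of_nonneg_left h1 (by positivity : (0 : ℝ) ≤ 1 / n)
      calc g2 t ≤ (1 / n : ℝ) * ∑ i, L * b_ i ^ 2 := h2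
        _ = L * S := by rw [hSdef, ← Finset.mul_sum]; ring
    -- Taylor bounds
    have hlow : g 0 + g1 0 + l * S / 2 ≤ g 1 := aux_taylor14 g g1 g2 hgd hg1d (l * S) hg2lo
    have hhigh : -g 0 + -g1 0 + -(L * S) / 2 ≤ -g 1 :=
      aux_taylor14 (fun t => -g t) (fun t => -g1 t) (fun t => -g2 t)
        (fun t => (hgd t).neg) (fun t => (hg1d t).neg) (-(L * S))
        (fun t => by show -(L * S) ≤ -g2 t; linarith [hg2hi t])
    -- quadratic form identity
    have hbi : ∀ i, b_ i = ∑ a : F, x i a * u a := by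
      intro i
      have h1 : (inner ℝ (x i) u : ℝ) = ∑ j, x i j * u j := by
        simp [PiLp.inner_apply, RCLike.inner_apply]
        exact Finset.sum_congr rfl fun j _ => mul_comm _ _
      show (inner ℝ (x i) u : ℝ) = _
      rw [h1, Finset.sum_coe_sort F (fun j => x i j * u j)]
      exact (Finset.sum_subset F.subset_univ fun j _ hj => by rw [hu j hj, mul_zero]).symm
    have hSM : S = ∑ a : F, ∑ c : F, M a c * u a * u c := by
      rw [hSdef]
      have h1 : ∀ i, b_ i ^ 2 = ∑ a : F, ∑ c : F, (x i a * u a) * (x i c * u c) := by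
        intro i
        rw [hbi i, sq, Finset.sum_mul_sum]
      simp only [h1]
      simp only [Finset.mul_sum]
      rw [Finset.sum_comm]
      refine Finset.sum_congr rfl fun a _ => ?_
      rw [Finset.sum_comm]
      refine Finset.sum_congr rfl fun c _ => ?_
      rw [hM, Finset.mul_sum, Finset.sum_mul, Finset.sum_mul]
      refine Finset.sum_congr rfl fun i _ => ?_
      ring
    -- restricted vector and Rayleigh bounds
    set v : EuclideanSpace ℝ F := (WithLp.equiv 2 (F → ℝ)).symm (fun a => u a) with hvdef
    have hva : ∀ a : F, v a = u a := fun a => rfl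
    have hnormu : ‖u‖ ^ 2 = ∑ a : F, (u a) ^ 2 := by
      rw [EuclideanSpace.norm_eq, Real.sq_sqrt (by positivity),
        show ∑ j : Fin p, ‖u j‖ ^ 2 = ∑ j ∈ F, ‖u j‖ ^ 2 from
          (Finset.sum_subset F.subset_univ fun j _ hj => by rw [hu j hj]; simp).symm,
        ← Finset.sum_coe_sort F (fun j => ‖u j‖ ^ 2)]
      exact Finset.sum_congr rfl fun a _ => by rw [Real.norm_eq_abs, sq_abs]
    have hnormv : ‖v‖ ^ 2 = ‖u‖ ^ 2 := by
      rw [EuclideanSpace.norm_eq, Real.sq_sqrt (by positivity), hnormu]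
      exact Finset.sum_congr rfl fun a _ => by rw [hva, Real.norm_eq_abs, sq_abs]
    have hray := aux_rayleigh14 M hHerm v lmin lmax
      (fun j => Finset.inf'_le _ (Finset.mem_univ j))
      (fun j => Finset.le_sup' _ (Finset.mem_univ j))
    obtain ⟨hr1, hr2⟩ := hray
    simp only [hva] at hr1 hr2
    rw [hnormv, ← hSM] at hr1 hr2
    -- final arithmetic
    have hu2 : (0 : ℝ) < ‖u‖ ^ 2 := by
      have : 0 < ‖u‖ := norm_pos_iff.mpr hune
      positivity
    have h1u : w + u = w + (1 : ℝ) • u := by rw [one_smul]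
    have hQwu : Q (w + u) = g 1 := by rw [h1u, hgt 1]
    have hQw : Q w = g 0 := by rw [← hw0, hgt 0]
    rw [hQwu, hQw, hgradeq]
    have hD : (0 : ℝ) < 1 / 2 * ‖u‖ ^ 2 := by linarith [hu2]
    have e1 : l * (lmin * ‖u‖ ^ 2) ≤ l * S := mul_le_mul_of_nonneg_left hr1 hl.le
    have e2 : L * S ≤ L * (lmax * ‖u‖ ^ 2) := mul_le_mul_of_nonneg_left hr2 hL.le
    constructor
    · rw [le_div_iff₀ hD]
      have e3 : l * lmin * (1 / 2 * ‖u‖ ^ 2) = 1 / 2 * (l * (lmin * ‖u‖ ^ 2)) := by ring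
      rw [e3]
      linarith [e1, hlow]
    · rw [div_le_iff₀ hD]
      have e4 : L * lmax * (1 / 2 * ‖u‖ ^ 2) = 1 / 2 * (L * (lmax * ‖u‖ ^ 2)) := by ring
      rw [e4]
      linarith [e2, hhigh]
  -- nonemptiness of the quotient set
  have hne : Set.Nonempty {r | ∃ w u : EuclideanSpace ℝ (Fin p),
      (∀ i ∉ F, u i = 0) ∧ u ≠ 0 ∧
      r = (Q (w + u) - Q w - (inner ℝ (gradQ w) u : ℝ)) / (1 / 2 * ‖u‖ ^ 2)} := by
    refine ⟨_, 0, EuclideanSpace.single (a0 : Fin p) 1, fun i hi => ?_, fun h => ?_, rfl⟩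
    · rw [EuclideanSpace.single_apply, if_neg]
      intro h
      exact hi (by rw [h]; exact a0.2)
    · have h1 : (EuclideanSpace.single (a0 : Fin p) (1 : ℝ)) (a0 : Fin p) = 1 := by
        simp [EuclideanSpace.single_apply]
      rw [h] at h1
      simp at h1
  constructor
  · rw [hρm]
    exact le_csInf hne fun r hr => (key r hr).1
  · rw [hρp]
    exact csSup_le hne fun r hr => (key r hr).2
end
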